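/- With notation as in the spectral representation formula (P^{-k} = UΛ^{-2k}Uᵀ for k ≥ 1, P^0 = I − UUᵀ, and S_k(E) the k-th order perturbation term), each term satisfies the bound ‖S_k(E)‖ ≤ binom(2k, k) · ‖E‖^k / λ_min^{2k} ≤ (4‖E‖/λ_min²)^k, where λ_min² is the smallest eigenvalue of Λ². -/

import Mathlib

open Matrix

/-- Spectral (operator) norm of a real matrix. -/
noncomputable def spec {m n : ℕ} (A : Matrix (Fin m) (Fin n) ℝ) : ℝ :=
  sSup {c : ℝ | ∃ v : Fin n → ℝ, (∑ j, v j ^ 2) ≤ 1 ∧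
    c = Real.sqrt (∑ i, (A.mulVec v i) ^ 2)}

/-- `P^{-s}`: for `s ≥ 1`, `P^{-s} = U Λ^{-2s} Uᵀ` (where `lam2 i = λᵢ²`), and
`P^{0} = I − UUᵀ`. -/
noncomputable def Pneg {p r : ℕ} (U : Matrix (Fin p) (Fin r) ℝ) (lam2 : Fin r → ℝ)
    (s : ℕ) : Matrix (Fin p) (Fin p) ℝ :=
  if s = 0 then 1 - U * Uᵀ
  else U * Matrix.diagonal (fun i => ((lam2 i) ^ s)⁻¹) * Uᵀ

/-- The `k`-th order perturbation term
`S_k(E) = Σ_{s₁+⋯+s_{k+1}=k} (−1)^{1+τ(s)} P^{-s₁} E P^{-s₂} E ⋯ E P^{-s_{k+1}}`. -/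
noncomputable def Sterm {p r : ℕ} (U : Matrix (Fin p) (Fin r) ℝ) (lam2 : Fin r → ℝ)
    (E : Matrix (Fin p) (Fin p) ℝ) (k : ℕ) : Matrix (Fin p) (Fin p) ℝ :=
  ∑ s ∈ Finset.univ.filter (fun s : Fin (k + 1) → Fin (k + 1) => ∑ j, (s j : ℕ) = k),
    ((-1 : ℝ) ^ (1 + (Finset.univ.filter fun j => (s j : ℕ) ≠ 0).card)) •
      ((List.ofFn fun j : Fin k => Pneg U lam2 (s j.castSucc : ℕ) * E).prod *
        Pneg U lam2 (s (Fin.last k) : ℕ))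

open scoped Matrix.Norms.L2Operator

lemma euc_norm_eq {n : ℕ} (x : EuclideanSpace ℝ (Fin n)) :
    ‖x‖ = Real.sqrt (∑ j, x j ^ 2) := by
  rw [EuclideanSpace.norm_eq]
  congr 1
  exact Finset.sum_congr rfl fun j _ => by rw [Real.norm_eq_abs, sq_abs]

lemma spec_eq_norm {m n : ℕ} (A : Matrix (Fin m) (Fin n) ℝ) : spec A = ‖A‖ := by
  rw [Matrix.l2_opNorm_def, ← ContinuousLinearMap.sSup_unitClosedBall_eq_norm]
  unfold spec
  congr 1
  ext c
  constructor
  · rintro ⟨v, hv, rfl⟩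
    refine ⟨(WithLp.equiv 2 (Fin n → ℝ)).symm v, ?_, ?_⟩
    · rw [Metric.mem_closedBall, dist_zero_right, euc_norm_eq, ← Real.sqrt_one]
      exact Real.sqrt_le_sqrt hv
    · simp only [LinearEquiv.trans_apply, LinearMap.coe_toContinuousLinearMap']
      rw [euc_norm_eq]
      rfl
  · rintro ⟨x, hx, rfl⟩
    refine ⟨fun j => x j, ?_, ?_⟩
    · rw [Metric.mem_closedBall, dist_zero_right, euc_norm_eq] at hx
      have h0 : (0:ℝ) ≤ ∑ j, x j ^ 2 := Finset.sum_nonneg fun _ _ => sq_nonneg _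
      show (∑ j, x j ^ 2) ≤ 1
      nlinarith [Real.sq_sqrt h0, Real.sqrt_nonneg (∑ j, x j ^ 2)]
    · simp only [LinearEquiv.trans_apply, LinearMap.coe_toContinuousLinearMap']
      rw [euc_norm_eq]
      rfl

lemma real_conjT {m n : ℕ} (A : Matrix (Fin m) (Fin n) ℝ) : Aᴴ = Aᵀ := by
  ext i j; simp [conjTranspose_apply]

lemma norm_proj_le_one {p : ℕ} (M : Matrix (Fin p) (Fin p) ℝ)
    (h1 : Mᵀ = M) (h2 : M * M = M) : ‖M‖ ≤ 1 := by
  have h := CStarRing.norm_star_mul_self (x := M)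
  rw [Matrix.star_eq_conjTranspose, real_conjT, h1, h2] at h
  nlinarith [norm_nonneg M]

lemma norm_one_le_one' {p : ℕ} : ‖(1 : Matrix (Fin p) (Fin p) ℝ)‖ ≤ 1 :=
  norm_proj_le_one 1 (transpose_one) (one_mul 1)

lemma norm_U_le_one {p r : ℕ} (U : Matrix (Fin p) (Fin r) ℝ) (hU : Uᵀ * U = 1) :
    ‖U‖ ≤ 1 := by
  have h := Matrix.l2_opNorm_conjTranspose_mul_self U
  rw [real_conjT, hU] at h
  nlinarith [norm_nonneg U, norm_one_le_one' (p := r)]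

lemma norm_Ut_le_one {p r : ℕ} (U : Matrix (Fin p) (Fin r) ℝ) (hU : Uᵀ * U = 1) :
    ‖Uᵀ‖ ≤ 1 := by
  rw [← real_conjT, Matrix.l2_opNorm_conjTranspose]
  exact norm_U_le_one U hU

lemma norm_diagonal_le {r : ℕ} (d : Fin r → ℝ) (c : ℝ) (hc : 0 ≤ c)
    (hd : ∀ i, |d i| ≤ c) : ‖Matrix.diagonal d‖ ≤ c := by
  rw [Matrix.l2_opNorm_def]
  refine ContinuousLinearMap.opNorm_le_bound _ hc fun x => ?_
  rw [LinearEquiv.trans_apply] at *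
  rw [euc_norm_eq, euc_norm_eq]
  have key : ∀ i, ((Matrix.toEuclideanLin (Matrix.diagonal d)).toContinuousLinearMap x) i
      = d i * x i := fun i => by
    show ((Matrix.diagonal d) *ᵥ (fun j => x j)) i = d i * x i
    rw [Matrix.mulVec_diagonal]
  calc Real.sqrt (∑ j, ((Matrix.toEuclideanLin (Matrix.diagonal d)).toContinuousLinearMap x) j ^ 2)
      = Real.sqrt (∑ j, (d j * x j) ^ 2) := by
        congr 1; exact Finset.sum_congr rfl fun j _ => by rw [key j]
    _ ≤ Real.sqrt (∑ j, c ^ 2 * x j ^ 2) := by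
        apply Real.sqrt_le_sqrt
        refine Finset.sum_le_sum fun j _ => ?_
        rw [mul_pow]
        have h2 : d j ^ 2 ≤ c ^ 2 := by
          nlinarith [hd j, abs_nonneg (d j), sq_abs (d j)]
        exact mul_le_mul_of_nonneg_right h2 (sq_nonneg (x j))
    _ = c * Real.sqrt (∑ j, x j ^ 2) := by
        rw [← Finset.mul_sum, Real.sqrt_mul (sq_nonneg c), Real.sqrt_sq hc]

lemma norm_Pneg_le {p r : ℕ} (U : Matrix (Fin p) (Fin r) ℝ) (hU : Uᵀ * U = 1)
    (lam2 : Fin r → ℝ) (lmin2 : ℝ) (hlmin2 : 0 < lmin2) (hlam2 : ∀ i, lmin2 ≤ lam2 i)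
    (s : ℕ) : ‖Pneg U lam2 s‖ ≤ lmin2⁻¹ ^ s := by
  unfold Pneg
  rcases Nat.eq_zero_or_pos s with hs | hs
  · subst hs
    rw [if_pos rfl, pow_zero]
    have hPP : U * Uᵀ * (U * Uᵀ) = U * Uᵀ := by
      rw [Matrix.mul_assoc, ← Matrix.mul_assoc Uᵀ, hU, Matrix.one_mul]
    refine norm_proj_le_one _ ?_ ?_
    · rw [transpose_sub, transpose_one, transpose_mul, transpose_transpose]
    · rw [sub_mul, mul_sub, mul_sub, hPP]
      simp only [Matrix.one_mul, Matrix.mul_one]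
      abel
  · rw [if_neg (by omega)]
    have h1 : ‖U * Matrix.diagonal (fun i => ((lam2 i) ^ s)⁻¹) * Uᵀ‖
        ≤ ‖U * Matrix.diagonal (fun i => ((lam2 i) ^ s)⁻¹)‖ * ‖Uᵀ‖ :=
      Matrix.l2_opNorm_mul _ _
    have h2 : ‖U * Matrix.diagonal (fun i => ((lam2 i) ^ s)⁻¹)‖
        ≤ ‖U‖ * ‖Matrix.diagonal (fun i => ((lam2 i) ^ s)⁻¹)‖ := Matrix.l2_opNorm_mul _ _
    have hdiag : ‖Matrix.diagonal (fun i => ((lam2 i) ^ s)⁻¹)‖ ≤ lmin2⁻¹ ^ s := by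
      refine norm_diagonal_le _ _ (by positivity) fun i => ?_
      have hl : 0 < lam2 i := lt_of_lt_of_le hlmin2 (hlam2 i)
      rw [abs_of_nonneg (by positivity), ← inv_pow]
      refine pow_le_pow_left₀ (by positivity) ?_ s
      exact inv_anti₀ hlmin2 (hlam2 i)
    have hU1 := norm_U_le_one U hU
    have hUt1 := norm_Ut_le_one U hU
    have hd0 : (0:ℝ) ≤ ‖Matrix.diagonal (fun i => ((lam2 i) ^ s)⁻¹)‖ := norm_nonneg _
    calc ‖U * Matrix.diagonal (fun i => ((lam2 i) ^ s)⁻¹) * Uᵀ‖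
        ≤ ‖U * Matrix.diagonal (fun i => ((lam2 i) ^ s)⁻¹)‖ * ‖Uᵀ‖ := h1
      _ ≤ (‖U‖ * ‖Matrix.diagonal (fun i => ((lam2 i) ^ s)⁻¹)‖) * ‖Uᵀ‖ := by
          exact mul_le_mul_of_nonneg_right h2 (norm_nonneg _)
      _ ≤ lmin2⁻¹ ^ s := by
          nlinarith [norm_nonneg U, norm_nonneg (Uᵀ), mul_nonneg (norm_nonneg U) hd0]

lemma prod_norm_bound {p : ℕ} : ∀ {m : ℕ} (g : Fin m → Matrix (Fin p) (Fin p) ℝ)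
    (c : Fin m → ℝ) (_ : ∀ j, ‖g j‖ ≤ c j) (B : Matrix (Fin p) (Fin p) ℝ) (b : ℝ)
    (_ : ‖B‖ ≤ b), ‖(List.ofFn g).prod * B‖ ≤ (∏ j, c j) * b := by
  intro m
  induction m with
  | zero => intro g c hc B b hb; simpa using hb
  | succ m ih =>
    intro g c hc B b hb
    have hc0 : ∀ j, 0 ≤ c j := fun j => le_trans (norm_nonneg _) (hc j)
    have hb0 : 0 ≤ b := le_trans (norm_nonneg _) hb
    rw [List.ofFn_succ, List.prod_cons, mul_assoc]
    calc ‖g 0 * ((List.ofFn fun i : Fin m => g i.succ).prod * B)‖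
        ≤ ‖g 0‖ * ‖(List.ofFn fun i : Fin m => g i.succ).prod * B‖ := norm_mul_le _ _
      _ ≤ c 0 * ((∏ j : Fin m, c j.succ) * b) := by
          refine mul_le_mul (hc 0) (ih _ _ (fun j => hc j.succ) B b hb) (norm_nonneg _)
            (hc0 0)
      _ = (∏ j : Fin (m + 1), c j) * b := by
          rw [Fin.prod_univ_succ, mul_assoc]

lemma card_tuples_le (k : ℕ) :
    (Finset.univ.filter (fun s : Fin (k + 1) → Fin (k + 1) => ∑ j, (s j : ℕ) = k)).card
      ≤ (2 * k).choose k := by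
  classical
  have hcard : ((Finset.univ : Finset (Sym (Fin (k + 1)) k)).image Sym.toMultiset).card
      = (2 * k).choose k := by
    rw [Finset.card_image_of_injective _ (fun a b h => Sym.coe_injective h),
      Finset.card_univ, Sym.card_sym_eq_choose, Fintype.card_fin]
    congr 1
    omega
  rw [← hcard]
  apply Finset.card_le_card_of_injOn
    (fun s => ∑ j, Multiset.replicate (s j : ℕ) j)
  · intro s hs
    rw [Finset.mem_coe, Finset.mem_filter] at hs
    rw [Finset.mem_coe, Finset.mem_image]
    refine ⟨⟨∑ j, Multiset.replicate (s j : ℕ) j, ?_⟩, Finset.mem_univ _, rfl⟩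
    rw [Multiset.card_sum Finset.univ (fun j : Fin (k+1) => Multiset.replicate ((s j) : ℕ) j)]
    simpa using hs.2
  · intro s hs t ht hst
    have hcount : ∀ (u : Fin (k + 1) → Fin (k + 1)) (j : Fin (k + 1)),
        (∑ i, Multiset.replicate (u i : ℕ) i).count j = (u j : ℕ) := by
      intro u j
      rw [Multiset.count_sum']
      simp [Multiset.count_replicate, eq_comm]
    funext j
    have := hcount s j
    rw [show (∑ i, Multiset.replicate (s i : ℕ) i) = ∑ i, Multiset.replicate (t i : ℕ) i
      from hst, hcount t j] at this
    exact (Fin.ext this).symm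

lemma choose_le_four_pow (k : ℕ) : ((2 * k).choose k : ℝ) ≤ 4 ^ k := by
  have h : (2 * k).choose k ≤ 4 ^ k := by
    have h1 : (2 * k).choose k ≤ ∑ i ∈ Finset.range (2 * k + 1), (2 * k).choose i :=
      Finset.single_le_sum (f := fun i => (2 * k).choose i)
        (fun _ _ => Nat.zero_le _) (Finset.mem_range.mpr (by omega))
    rw [Nat.sum_range_choose] at h1
    calc (2 * k).choose k ≤ 2 ^ (2 * k) := h1
      _ = 4 ^ k := by rw [pow_mul]; norm_num
  exact_mod_cast h

theorem stmt10 (p r k : ℕ) (hk : 1 ≤ k)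
    (U : Matrix (Fin p) (Fin r) ℝ) (hU : Uᵀ * U = 1)
    (lam2 : Fin r → ℝ) (lmin2 : ℝ) (hlmin2 : 0 < lmin2)
    (hlam2 : ∀ i, lmin2 ≤ lam2 i)
    (E : Matrix (Fin p) (Fin p) ℝ) :
    spec (Sterm U lam2 E k) ≤ (Nat.choose (2 * k) k : ℝ) * spec E ^ k / lmin2 ^ k ∧
    spec (Sterm U lam2 E k) ≤ (4 * spec E / lmin2) ^ k := by
  rw [spec_eq_norm, spec_eq_norm]
  set F := Finset.univ.filter (fun s : Fin (k + 1) → Fin (k + 1) => ∑ j, (s j : ℕ) = k)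
    with hF
  -- bound on each term
  have hterm : ∀ s ∈ F,
      ‖((-1 : ℝ) ^ (1 + (Finset.univ.filter fun j => (s j : ℕ) ≠ 0).card)) •
        ((List.ofFn fun j : Fin k => Pneg U lam2 (s j.castSucc : ℕ) * E).prod *
          Pneg U lam2 (s (Fin.last k) : ℕ))‖ ≤ ‖E‖ ^ k / lmin2 ^ k := by
    intro s hs
    rw [hF, Finset.mem_filter] at hs
    have hsum : (∑ j : Fin k, (s j.castSucc : ℕ)) + (s (Fin.last k) : ℕ) = k := by
      have h2 := hs.2
      rw [Fin.sum_univ_castSucc] at h2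
      exact h2
    rw [norm_smul]
    have hsign : ‖(-1 : ℝ) ^ (1 + (Finset.univ.filter fun j => (s j : ℕ) ≠ 0).card)‖ = 1 := by
      rw [norm_pow, norm_neg, norm_one, one_pow]
    rw [hsign, one_mul]
    have hbound := prod_norm_bound
      (fun j : Fin k => Pneg U lam2 (s j.castSucc : ℕ) * E)
      (fun j : Fin k => lmin2⁻¹ ^ (s j.castSucc : ℕ) * ‖E‖)
      (fun j => by
        calc ‖Pneg U lam2 (s j.castSucc : ℕ) * E‖
            ≤ ‖Pneg U lam2 (s j.castSucc : ℕ)‖ * ‖E‖ := Matrix.l2_opNorm_mul _ _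
          _ ≤ lmin2⁻¹ ^ (s j.castSucc : ℕ) * ‖E‖ :=
              mul_le_mul_of_nonneg_right
                (norm_Pneg_le U hU lam2 lmin2 hlmin2 hlam2 _) (norm_nonneg _))
      (Pneg U lam2 (s (Fin.last k) : ℕ)) (lmin2⁻¹ ^ (s (Fin.last k) : ℕ))
      (norm_Pneg_le U hU lam2 lmin2 hlmin2 hlam2 _)
    refine le_trans hbound (le_of_eq ?_)
    rw [Finset.prod_mul_distrib, Finset.prod_const, Finset.prod_pow_eq_pow_sum]
    rw [Finset.card_univ, Fintype.card_fin]
    rw [mul_comm (lmin2⁻¹ ^ _) (‖E‖ ^ k), mul_assoc, ← pow_add, hsum]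
    rw [inv_pow, div_eq_mul_inv]
  -- sum bound
  have hN : ‖Sterm U lam2 E k‖ ≤ (F.card : ℝ) * (‖E‖ ^ k / lmin2 ^ k) := by
    unfold Sterm
    rw [← hF]
    calc ‖∑ s ∈ F, ((-1 : ℝ) ^ (1 + (Finset.univ.filter fun j => (s j : ℕ) ≠ 0).card)) •
        ((List.ofFn fun j : Fin k => Pneg U lam2 (s j.castSucc : ℕ) * E).prod *
          Pneg U lam2 (s (Fin.last k) : ℕ))‖
        ≤ ∑ s ∈ F, ‖((-1 : ℝ) ^ (1 + (Finset.univ.filter fun j => (s j : ℕ) ≠ 0).card)) •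
          ((List.ofFn fun j : Fin k => Pneg U lam2 (s j.castSucc : ℕ) * E).prod *
            Pneg U lam2 (s (Fin.last k) : ℕ))‖ := norm_sum_le _ _
      _ ≤ ∑ _s ∈ F, (‖E‖ ^ k / lmin2 ^ k) := Finset.sum_le_sum hterm
      _ = (F.card : ℝ) * (‖E‖ ^ k / lmin2 ^ k) := by
          rw [Finset.sum_const, nsmul_eq_mul]
  have hb0 : (0:ℝ) ≤ ‖E‖ ^ k / lmin2 ^ k := by positivity
  have hcard : (F.card : ℝ) ≤ ((2 * k).choose k : ℝ) := by
    exact_mod_cast card_tuples_le k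
  have h1 : ‖Sterm U lam2 E k‖ ≤ ((2 * k).choose k : ℝ) * ‖E‖ ^ k / lmin2 ^ k := by
    rw [mul_div_assoc]
    exact le_trans hN (mul_le_mul_of_nonneg_right hcard hb0)
  refine ⟨h1, ?_⟩
  refine le_trans h1 ?_
  rw [div_pow, mul_pow, mul_div_assoc, mul_div_assoc]
  exact mul_le_mul_of_nonneg_right (choose_le_four_pow k) hb0
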